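/- Every F_σ measure-zero subset C of 2^ω is contained in a set of the form H_{b̃,φ} = {x ∈ 2^ω : ∀^∞ n, x↾[b̃(n), b̃(n+1)) ∈ φ(n)}, where b̃ ∈ ω^ω is increasing with b̃(0)=0 and φ(n) ⊆ 2^{[b̃(n),b̃(n+1))} satisfies |φ(n)|/2^{b̃(n+1)-b̃(n)} ≤ 2^{-n} for all n. -/

import Mathlib

open MeasureTheory Filter

namespace Stmt7
open Classical in
noncomputable def trace (G : Set (ℕ → Bool)) (a b : ℕ) :
    Finset ({i // i ∈ Finset.Ico a b} → Bool) :=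
  Finset.univ.filter (fun s => ∃ x ∈ G, ∀ i : {i // i ∈ Finset.Ico a b}, x i.1 = s i)

lemma mem_trace {G : Set (ℕ → Bool)} {a b : ℕ} {s : {i // i ∈ Finset.Ico a b} → Bool} :
    s ∈ trace G a b ↔ ∃ x ∈ G, ∀ i : {i // i ∈ Finset.Ico a b}, x i.1 = s i := by
  classical
  simp [trace]

def ext' (a b : ℕ) (s : {i // i ∈ Finset.Ico a b} → Bool) : ℕ → Bool :=
  fun i => if h : i ∈ Finset.Ico a b then s ⟨i, h⟩ else false

def Cyl (a b : ℕ) (s : {i // i ∈ Finset.Ico a b} → Bool) : Set (ℕ → Bool) :=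
  {x | ∀ i ∈ Finset.Ico a b, x i = ext' a b s i}

lemma cyl_measurable (a b : ℕ) (s : {i // i ∈ Finset.Ico a b} → Bool) :
    MeasurableSet (Cyl a b s) := by
  have : Cyl a b s = ⋂ i ∈ Finset.Ico a b, (fun x : ℕ → Bool => x i) ⁻¹' {ext' a b s i} := by
    ext x; simp [Cyl]
  rw [this]
  exact MeasurableSet.biInter (Finset.Ico a b).countable_toSet
    (fun i _ => (measurable_pi_apply i) (measurableSet_singleton _))

def D (G : Set (ℕ → Bool)) (b : ℕ) : Set (ℕ → Bool) :=
  {x | ∃ y ∈ G, ∀ i < b, x i = y i}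

lemma D_eq (G : Set (ℕ → Bool)) (b : ℕ) :
    D G b = ⋃ s ∈ trace G 0 b, Cyl 0 b s := by
  ext x
  simp only [D, Set.mem_setOf_eq, Set.mem_iUnion, exists_prop]
  constructor
  · rintro ⟨y, hyG, hxy⟩
    refine ⟨fun i => y i.1, mem_trace.2 ⟨y, hyG, fun i => rfl⟩, ?_⟩
    intro i hi
    have hib : i < b := by simpa using hi
    simp only [ext', dif_pos hi]
    exact hxy i hib
  · rintro ⟨s, hs, hx⟩
    obtain ⟨y, hyG, hy⟩ := mem_trace.1 hs
    refine ⟨y, hyG, fun i hib => ?_⟩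
    have hi : i ∈ Finset.Ico 0 b := by simpa using hib
    have := hx i hi
    rw [this, ext', dif_pos hi, ← hy ⟨i, hi⟩]

lemma D_measurable (G : Set (ℕ → Bool)) (b : ℕ) : MeasurableSet (D G b) := by
  rw [D_eq]
  exact (trace G 0 b).measurableSet_biUnion (fun s _ => cyl_measurable 0 b s)

lemma measure_D (μ : Measure (ℕ → Bool))
    (hμ : ∀ (F : Finset ℕ) (f : ℕ → Bool),
      μ {x | ∀ i ∈ F, x i = f i} = (2⁻¹ : ENNReal) ^ F.card)
    (G : Set (ℕ → Bool)) (b : ℕ) :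
    μ (D G b) = ((trace G 0 b).card : ENNReal) * 2⁻¹ ^ b := by
  rw [D_eq]
  rw [measure_biUnion_finset ?disj (fun s _ => cyl_measurable 0 b s)]
  · have h1 : ∀ s ∈ trace G 0 b, μ (Cyl 0 b s) = (2⁻¹ : ENNReal) ^ b := by
      intro s _
      have := hμ (Finset.Ico 0 b) (ext' 0 b s)
      simpa [Cyl, Nat.card_Ico] using this
    rw [Finset.sum_congr rfl h1, Finset.sum_const, nsmul_eq_mul]
  case disj =>
    intro s _ t _ hst
    refine Set.disjoint_left.2 fun x hxs hxt => hst ?_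
    funext i
    have h1 := hxs i.1 i.2
    have h2 := hxt i.1 i.2
    have e1 : ext' 0 b s i.1 = s i := by simp only [ext', dif_pos i.2]
    have e2 : ext' 0 b t i.1 = t i := by simp only [ext', dif_pos i.2]
    rw [e1] at h1; rw [e2] at h2
    rw [← h1, ← h2]

lemma iInter_D {G : Set (ℕ → Bool)} (hG : IsClosed G) : (⋂ b, D G b) = G := by
  apply Set.Subset.antisymm
  · intro x hx
    have h : ∀ b, ∃ y ∈ G, ∀ i < b, x i = y i := fun b => Set.mem_iInter.1 hx b
    choose y hyG hxy using h
    have htend : Tendsto y atTop (nhds x) := by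
      rw [tendsto_pi_nhds]
      intro i
      refine Tendsto.congr' ?_ tendsto_const_nhds
      filter_upwards [eventually_ge_atTop (i + 1)] with b hb
      exact hxy b i (by omega)
    exact hG.mem_of_tendsto htend (Eventually.of_forall hyG)
  · intro x hx
    exact Set.mem_iInter.2 fun b => ⟨x, hx, fun _ _ => rfl⟩

lemma cancel (b : ℕ) : (2⁻¹ : ENNReal) ^ b * 2 ^ b = 1 := by
  rw [← ENNReal.inv_pow]
  exact ENNReal.inv_mul_cancel (pow_ne_zero _ (by norm_num)) (ENNReal.pow_ne_top (by norm_num))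

lemma key (μ : Measure (ℕ → Bool)) [IsProbabilityMeasure μ]
    (hμ : ∀ (F : Finset ℕ) (f : ℕ → Bool),
      μ {x | ∀ i ∈ F, x i = f i} = (2⁻¹ : ENNReal) ^ F.card)
    {G : Set (ℕ → Bool)} (hG : IsClosed G) (hG0 : μ G = 0) (a k : ℕ) :
    ∃ b, a < b ∧ (trace G 0 b).card * 2 ^ k ≤ 2 ^ b := by
  have hanti : Antitone (D G) := by
    intro b c hbc x hx
    obtain ⟨y, hyG, hxy⟩ := hx
    exact ⟨y, hyG, fun i hi => hxy i (lt_of_lt_of_le hi hbc)⟩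
  have htend : Tendsto (fun b => μ (D G b)) atTop (nhds 0) := by
    have := MeasureTheory.tendsto_measure_iInter_atTop (μ := μ)
      (fun b => (D_measurable G b).nullMeasurableSet) hanti
      ⟨0, (measure_lt_top μ _).ne⟩
    rwa [iInter_D hG, hG0] at this
  have hev : ∀ᶠ b in atTop, μ (D G b) < (2⁻¹ : ENNReal) ^ k := by
    apply htend.eventually_lt_const
    simp [ENNReal.pow_pos]
  obtain ⟨b, hb1, hb2⟩ := ((hev.and (eventually_gt_atTop a)).exists)
  refine ⟨b, hb2, ?_⟩
  rw [measure_D μ hμ G b] at hb1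
  have h2b : ((trace G 0 b).card : ENNReal) ≤ 2⁻¹ ^ k * 2 ^ b := by
    have hmul := mul_le_mul_of_nonneg_right hb1.le (zero_le : (0 : ENNReal) ≤ 2 ^ b)
    calc ((trace G 0 b).card : ENNReal)
        = ((trace G 0 b).card : ENNReal) * (2⁻¹ ^ b * 2 ^ b) := by
          rw [cancel, mul_one]
      _ = ((trace G 0 b).card : ENNReal) * 2⁻¹ ^ b * 2 ^ b := by ring
      _ ≤ 2⁻¹ ^ k * 2 ^ b := hmul
  have h3 : ((trace G 0 b).card : ENNReal) * 2 ^ k ≤ 2 ^ b := by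
    have hmul := mul_le_mul_of_nonneg_right h2b (zero_le : (0 : ENNReal) ≤ 2 ^ k)
    calc ((trace G 0 b).card : ENNReal) * 2 ^ k ≤ 2⁻¹ ^ k * 2 ^ b * 2 ^ k := hmul
      _ = (2⁻¹ ^ k * 2 ^ k) * 2 ^ b := by ring
      _ = 2 ^ b := by rw [cancel, one_mul]
  exact_mod_cast h3

lemma trace_card_le (G : Set (ℕ → Bool)) (a b : ℕ) :
    (trace G a b).card ≤ (trace G 0 b).card := by
  classical
  have hsub : ∀ i : {i // i ∈ Finset.Ico a b}, i.1 ∈ Finset.Ico 0 b := by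
    intro i
    have := i.2
    simp only [Finset.mem_Ico] at *
    omega
  have : trace G a b ⊆ (trace G 0 b).image
      (fun s (i : {i // i ∈ Finset.Ico a b}) => s ⟨i.1, hsub i⟩) := by
    intro s hs
    obtain ⟨x, hxG, hx⟩ := mem_trace.1 hs
    refine Finset.mem_image.2 ⟨fun i => x i.1, mem_trace.2 ⟨x, hxG, fun _ => rfl⟩, ?_⟩
    funext i
    exact hx i
  exact (Finset.card_le_card this).trans (Finset.card_image_le)

end Stmt7

/-- Every F_σ measure-zero subset C of 2^ω is contained in some
H_{b,φ} = {x : ∀^∞ n, x↾[b n, b (n+1)) ∈ φ n} where b is increasing with b 0 = 0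
and |φ n|/2^{b(n+1)-b(n)} ≤ 2^{-n}. -/
theorem stmt_7 (μ : Measure (ℕ → Bool)) [IsProbabilityMeasure μ]
    (hμ : ∀ (F : Finset ℕ) (f : ℕ → Bool),
      μ {x | ∀ i ∈ F, x i = f i} = (2⁻¹ : ENNReal) ^ F.card)
    (C : Set (ℕ → Bool)) (F : ℕ → Set (ℕ → Bool))
    (hFcl : ∀ n, IsClosed (F n)) (hF0 : ∀ n, μ (F n) = 0) (hC : C = ⋃ n, F n) :
    ∃ b : ℕ → ℕ, StrictMono b ∧ b 0 = 0 ∧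
      ∃ φ : ∀ n : ℕ, Finset ({i // i ∈ Finset.Ico (b n) (b (n + 1))} → Bool),
        (∀ n, ((φ n).card : ℝ) / 2 ^ (b (n + 1) - b n) ≤ (2 : ℝ)⁻¹ ^ n) ∧
        C ⊆ {x : ℕ → Bool |
          ∀ᶠ n in atTop, (fun i : {i // i ∈ Finset.Ico (b n) (b (n + 1))} => x i.1) ∈ φ n} := by
  classical
  set G : ℕ → Set (ℕ → Bool) := fun n => ⋃ i ∈ Finset.range (n + 1), F i with hGdef
  have hGcl : ∀ n, IsClosed (G n) := fun n =>
    Set.Finite.isClosed_biUnion (Finset.finite_toSet _) (fun i _ => hFcl i)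
  have hG0 : ∀ n, μ (G n) = 0 := fun n =>
    (measure_biUnion_null_iff ((Finset.range (n + 1)).countable_toSet)).2 (fun i _ => hF0 i)
  have key' : ∀ n a : ℕ, ∃ c, a < c ∧
      (Stmt7.trace (G n) 0 c).card * 2 ^ (n + a) ≤ 2 ^ c :=
    fun n a => Stmt7.key μ hμ (hGcl n) (hG0 n) a (n + a)
  choose f hf1 hf2 using key'
  refine ⟨fun n => Nat.rec 0 (fun m bm => f m bm) n, strictMono_nat_of_lt_succ (fun n => hf1 n _),
    rfl, fun n => Stmt7.trace (G n) _ _, ?_, ?_⟩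
  · intro n
    set A : ℕ := Nat.rec 0 (fun m bm => f m bm) n with hA
    set B : ℕ := f n A with hB
    have hAB : A < B := hf1 n A
    have hcard : (Stmt7.trace (G n) A B).card * 2 ^ (n + A) ≤ 2 ^ B :=
      le_trans (Nat.mul_le_mul_right _ (Stmt7.trace_card_le (G n) A B)) (hf2 n A)
    have hcastR : ((Stmt7.trace (G n) A B).card : ℝ) * 2 ^ (n + A) ≤ 2 ^ B := by
      exact_mod_cast hcard
    set c : ℝ := ((Stmt7.trace (G n) A B).card : ℝ) with hc
    have key3 : c * 2 ^ n ≤ 2 ^ (B - A) := by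
      rw [← mul_le_mul_iff_of_pos_right (show (0:ℝ) < 2 ^ A by positivity)]
      calc c * 2 ^ n * 2 ^ A = c * 2 ^ (n + A) := by rw [mul_assoc, ← pow_add]
        _ ≤ 2 ^ B := hcastR
        _ = 2 ^ (B - A) * 2 ^ A := by rw [← pow_add]; congr 1; omega
    have hpos : (0:ℝ) < 2 ^ (B - A) := by positivity
    rw [div_le_iff₀ hpos, inv_pow]
    have h4 : c ≤ 2 ^ (B - A) / 2 ^ n := (le_div_iff₀ (by positivity)).2 key3
    rw [div_eq_mul_inv] at h4
    linarith [h4]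
  · intro x hx
    rw [hC] at hx
    obtain ⟨m, hm⟩ := Set.mem_iUnion.1 hx
    simp only [Set.mem_setOf_eq]
    filter_upwards [eventually_ge_atTop m] with n hn
    refine Stmt7.mem_trace.2 ⟨x, ?_, fun i => rfl⟩
    refine Set.mem_iUnion₂.2 ⟨m, ?_, hm⟩
    simpa using Nat.lt_succ_of_le hn
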